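/- Let (X,d) be a complete metric space, k ∈ ℕ, and T : X^ℕ → X (a map on infinite sequences in X) satisfy: for all u₁,…,u_k, v₁,…,v_k ∈ X, d(T(û), T(v̂)) ≤ (β(d(u_k, v_k))/2)·( d(T(û), u_k) + d(T(v̂), v_k) ), where û denotes the sequence (u₁,…,u_{k-1}, u_k, u_k, u_k, …) (the k-th entry repeated from position k onward), similarly v̂, and β is a Geraghty function. Then there exists u ∈ X such that T applied to the constant sequence (u,u,…) equals u, and for any base points x₁,…,x_k ∈ X, the infinite k-Picard sequence defined by x_{n+k} := T(x_n, x_{n+1},…,x_{n+k-1}, x_{n+k-1}, x_{n+k-1},…) converges to u. -/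

import Mathlib

open Filter Topology

def IsGeraghty (β : ℝ → ℝ) : Prop :=
  (∀ t : ℝ, 0 ≤ t → 0 ≤ β t ∧ β t < 1) ∧
  (∀ t : ℕ → ℝ, (∀ n, 0 ≤ t n) →
    Filter.Tendsto (fun n => β (t n)) Filter.atTop (nhds 1) →
    Filter.Tendsto t Filter.atTop (nhds 0))

def hatSeq {X : Type*} (k : ℕ) (hk : 0 < k) (u : Fin k → X) : ℕ → X :=
  fun i => u ⟨min i (k - 1), by omega⟩

lemma hatSeq_const {X : Type*} (k : ℕ) (hk : 0 < k) (u : X) :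
    hatSeq k hk (fun _ => u) = fun _ => u := rfl

noncomputable def picard {X : Type*} (k : ℕ) (hk : 0 < k) (T : (ℕ → X) → X) (x0 : X) : ℕ → X
  | n =>
    if h : n < k then x0
    else T (hatSeq k hk (fun i : Fin k => picard k hk T x0 (n - k + i)))
  termination_by n => n
  decreasing_by
    have := i.isLt
    simp only [not_lt] at h
    omega

lemma picard_spec {X : Type*} (k : ℕ) (hk : 0 < k) (T : (ℕ → X) → X) (x0 : X) (n : ℕ) :
    picard k hk T x0 (n + k) = T (hatSeq k hk (fun i : Fin k => picard k hk T x0 (n + i))) := by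
  rw [picard]
  rw [dif_neg (by omega : ¬ n + k < k)]
  simp only [Nat.add_sub_cancel]

theorem aux_conv {X : Type*} [MetricSpace X] [CompleteSpace X]
    (k : ℕ) (hk : 0 < k) (β : ℝ → ℝ) (hβ : IsGeraghty β) (T : (ℕ → X) → X) (hk1 : k - 1 < k)
    (hT : ∀ a b : Fin k → X,
      dist (T (hatSeq k hk a)) (T (hatSeq k hk b)) ≤
        β (dist (a ⟨k - 1, hk1⟩) (b ⟨k - 1, hk1⟩)) / 2 *
          (dist (T (hatSeq k hk a)) (a ⟨k - 1, hk1⟩) +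
            dist (T (hatSeq k hk b)) (b ⟨k - 1, hk1⟩)))
    (x : ℕ → X)
    (hx : ∀ n, x (n + k) = T (hatSeq k hk (fun i : Fin k => x (n + i)))) :
    ∃ v : X, T (fun _ => v) = v ∧ Tendsto x atTop (𝓝 v) := by
  classical
  set D : ℕ → ℝ := fun n => dist (x (n + k)) (x (n + (k - 1))) with hDdef
  have hD0 : ∀ n, 0 ≤ D n := fun n => dist_nonneg
  -- key inequality
  have key : ∀ n m, dist (x (n + k)) (x (m + k)) ≤
      β (dist (x (n + (k - 1))) (x (m + (k - 1)))) / 2 * (D n + D m) := by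
    intro n m
    have h1 := hT (fun i : Fin k => x (n + i)) (fun i : Fin k => x (m + i))
    rw [← hx n, ← hx m] at h1
    exact h1
  have βprop := hβ.1
  -- step inequality
  have step : ∀ n, D (n + 1) ≤ β (D n) * D n := by
    intro n
    have h1 := key n (n + 1)
    have e1 : n + 1 + (k - 1) = n + k := by omega
    rw [e1] at h1
    have e2 : dist (x (n + (k - 1))) (x (n + k)) = D n := dist_comm _ _
    rw [e2] at h1
    have e3 : dist (x (n + k)) (x (n + 1 + k)) = D (n + 1) := by
      rw [hDdef]; simp only
      rw [e1, dist_comm]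
    rw [e3] at h1
    have hb := βprop (D n) (hD0 n)
    nlinarith [hD0 n, hD0 (n + 1), hb.1, hb.2]
  have hmono : Antitone D := by
    apply antitone_nat_of_succ_le
    intro n
    have hb := βprop (D n) (hD0 n)
    nlinarith [step n, hD0 n, hb.1, hb.2]
  -- D tends to 0
  have hDL : Tendsto D atTop (𝓝 (⨅ n, D n)) :=
    tendsto_atTop_ciInf hmono ⟨0, fun r ⟨n, hn⟩ => hn ▸ hD0 n⟩
  have hL0 : 0 ≤ ⨅ n, D n := le_ciInf hD0
  have hD_to0 : Tendsto D atTop (𝓝 0) := by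
    rcases hL0.lt_or_eq with hL | hL
    · exfalso
      set L := ⨅ n, D n with hLdef
      have hDge : ∀ n, L ≤ D n := fun n =>
        ciInf_le ⟨0, fun r ⟨m, hm⟩ => hm ▸ hD0 m⟩ n
      have hDpos : ∀ n, 0 < D n := fun n => lt_of_lt_of_le hL (hDge n)
      have hshift : Tendsto (fun n => D (n + 1)) atTop (𝓝 L) :=
        hDL.comp (tendsto_add_atTop_nat 1)
      have hdiv : Tendsto (fun n => D (n + 1) / D n) atTop (𝓝 1) := by
        have := hshift.div hDL (ne_of_gt hL)
        rw [div_self (ne_of_gt hL)] at this; exact this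
      have hβ1 : Tendsto (fun n => β (D n)) atTop (𝓝 1) := by
        apply tendsto_of_tendsto_of_tendsto_of_le_of_le hdiv tendsto_const_nhds
        · intro n
          rw [div_le_iff₀ (hDpos n)]
          exact step n
        · intro n
          exact le_of_lt (βprop (D n) (hD0 n)).2
      have := hβ.2 D hD0 hβ1
      have : L = 0 := tendsto_nhds_unique hDL this
      exact absurd this (ne_of_gt hL)
    · rw [← hL] at hDL; exact hDL
  -- Cauchy
  have hcauchy : CauchySeq (fun n => x (n + k)) := by
    rw [Metric.cauchySeq_iff]
    intro ε hε
    rw [Metric.tendsto_atTop] at hD_to0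
    obtain ⟨N, hN⟩ := hD_to0 ε hε
    refine ⟨N, fun m hm n hn => ?_⟩
    have h1 := key m n
    have h2 : β (dist (x (m + (k - 1))) (x (n + (k - 1)))) / 2 * (D m + D n)
        ≤ (D m + D n) / 2 := by
      have hb := βprop _ (dist_nonneg : (0:ℝ) ≤ dist (x (m + (k - 1))) (x (n + (k - 1))))
      nlinarith [hD0 m, hD0 n, hb.1, hb.2]
    have h3 : D m < ε := by
      have := hN m hm; rw [Real.dist_eq, abs_of_nonneg (by simpa using sub_nonneg.mpr (hD0 m) : (0:ℝ) ≤ D m - 0)] at this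
      simpa using this
    have h4 : D n < ε := by
      have := hN n hn; rw [Real.dist_eq] at this
      have := abs_lt.mp this
      simpa using this.2
    calc dist (x (m + k)) (x (n + k)) ≤ _ := h1
      _ ≤ (D m + D n) / 2 := h2
      _ < ε := by linarith
  obtain ⟨v, hv⟩ := cauchySeq_tendsto_of_complete hcauchy
  have hxv : Tendsto x atTop (𝓝 v) := (tendsto_add_atTop_iff_nat k).mp hv
  refine ⟨v, ?_, hxv⟩
  -- v is a fixed point
  set C : ℝ := dist (T (fun _ => v)) v with hCdef
  have hfix : ∀ n, dist (x (n + k)) (T (fun _ => v)) ≤ (D n + C) / 2 := by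
    intro n
    have h1 := hT (fun i : Fin k => x (n + i)) (fun _ => v)
    rw [← hx n, hatSeq_const] at h1
    have hb := βprop (dist (x (n + (k - 1))) v) dist_nonneg
    have hC0 : 0 ≤ C := dist_nonneg
    nlinarith [hD0 n, hb.1, hb.2, h1]
  have hl : Tendsto (fun n => dist (x (n + k)) (T (fun _ => v))) atTop (𝓝 (dist v (T (fun _ => v)))) :=
    hv.dist tendsto_const_nhds
  have hr : Tendsto (fun n => (D n + C) / 2) atTop (𝓝 ((0 + C) / 2)) :=
    ((hD_to0.add tendsto_const_nhds).div_const 2)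
  have hfin : dist v (T (fun _ => v)) ≤ (0 + C) / 2 :=
    le_of_tendsto_of_tendsto' hl hr hfix
  rw [dist_comm] at hfin
  have : C ≤ 0 := by rw [hCdef] at *; linarith
  have : C = 0 := le_antisymm this dist_nonneg
  exact dist_eq_zero.mp this


theorem extended_kannan_geraghty_Hk {X : Type*} [MetricSpace X] [CompleteSpace X] [Nonempty X]
    (k : ℕ) (hk : 0 < k) (β : ℝ → ℝ) (hβ : IsGeraghty β) (T : (ℕ → X) → X)
    (hT : ∀ a b : Fin k → X,
      dist (T (hatSeq k hk a)) (T (hatSeq k hk b)) ≤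
        β (dist (a ⟨k - 1, by omega⟩) (b ⟨k - 1, by omega⟩)) / 2 *
          (dist (T (hatSeq k hk a)) (a ⟨k - 1, by omega⟩) +
            dist (T (hatSeq k hk b)) (b ⟨k - 1, by omega⟩))) :
    ∃ u : X, T (fun _ => u) = u ∧
      ∀ x : ℕ → X, (∀ n, x (n + k) = T (hatSeq k hk (fun i : Fin k => x (n + i)))) →
        Tendsto x atTop (𝓝 u) := by
  obtain ⟨x0⟩ := ‹Nonempty X›
  obtain ⟨u, hu, -⟩ := aux_conv k hk β hβ T (Nat.sub_lt hk Nat.one_pos) hT (picard k hk T x0) (picard_spec k hk T x0)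
  refine ⟨u, hu, fun x hx => ?_⟩
  obtain ⟨v, hv, hxv⟩ := aux_conv k hk β hβ T (Nat.sub_lt hk Nat.one_pos) hT x hx
  have huv : u = v := by
    have h1 := hT (fun _ => u) (fun _ => v)
    rw [hatSeq_const, hatSeq_const, hu, hv] at h1
    simp only [dist_self, add_zero, mul_zero] at h1
    exact dist_le_zero.mp h1
  exact huv ▸ hxv
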